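/- arXiv:1311.3646 — 5 statements merged into one kernel-verified Lean document; each statement's English description precedes it below -/
import Mathlib

section
/- Let N > 1 and K > 0 be real numbers, let 0 ≤ p ≤ 1, let α > 1, and set β := 1/α and p̃ := p/(1 − p/N). Suppose that real numbers x̄ and σ² with σ² ≥ 0 satisfy the quadratic equation K·β·x̄² − (p̃ + K·(1+β))·x̄ + K·(1 + β·σ²) = 0. Then K·(1 − x̄) ≤ 1/((1 − 1/N)·(1 − 1/α)). -/
/-- Lemma 2 core: the steady-state quadratic equation implies the bound
`K·(1 − x̄) ≤ 1/((1 − 1/N)·(1 − 1/α))`. -/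
theorem stmt_0 (N K p α xbar σ2 : ℝ)
    (hN : 1 < N) (hK : 0 < K) (hp0 : 0 ≤ p) (hp1 : p ≤ 1) (hα : 1 < α)
    (hσ2 : 0 ≤ σ2)
    (hquad : K * (1/α) * xbar ^ 2
        - (p / (1 - p / N) + K * (1 + 1/α)) * xbar
        + K * (1 + (1/α) * σ2) = 0) :
    K * (1 - xbar) ≤ 1 / ((1 - 1/N) * (1 - 1/α)) := by
  have hN0 : (0:ℝ) < N := by linarith
  have hα0 : (0:ℝ) < α := by linarith
  have hβ0 : 0 < 1/α := by positivity
  have hβ1 : 1/α < 1 := by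
    rw [div_lt_one hα0]; linarith
  have hNinv : 1/N < 1 := by rw [div_lt_one hN0]; linarith
  have hNpos : 0 < 1 - 1/N := by linarith
  have hαpos : 0 < 1 - 1/α := by linarith
  have hpN : 0 < 1 - p / N := by
    have : p / N ≤ 1 / N := by gcongr
    linarith
  set pt := p / (1 - p / N) with hpt
  have hpt0 : 0 ≤ pt := div_nonneg hp0 hpN.le
  have hptle : pt ≤ 1 / (1 - 1/N) := by
    rw [hpt, div_le_div_iff₀ hpN hNpos]
    have : p / N ≤ 1 / N := by gcongr
    nlinarith [div_nonneg hp0 hN0.le]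
  have key : K * (1 - xbar) * (1 - (1/α) * xbar) = pt * xbar - K * (1/α) * σ2 := by
    linear_combination hquad
  have hRHSpos : 0 < 1 / ((1 - 1/N) * (1 - 1/α)) := by positivity
  rcases le_or_gt 1 xbar with h1 | h1
  · nlinarith
  · -- x̄ < 1; first show 0 ≤ x̄
    have hx0 : 0 ≤ xbar := by
      by_contra h
      push_neg at h
      have hb : (1/α) * xbar < 0 := mul_neg_of_pos_of_neg hβ0 h
      have hpos : 0 < K * (1 - xbar) * (1 - (1/α) * xbar) :=
        mul_pos (mul_pos hK (by linarith)) (by linarith)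
      nlinarith [mul_nonneg (mul_nonneg hK.le hβ0.le) hσ2,
        mul_nonpos_of_nonneg_of_nonpos hpt0 h.le]
    have hfac : 1 - 1/α ≤ 1 - (1/α) * xbar := by nlinarith
    have h2 : K * (1 - xbar) * (1 - 1/α) ≤ pt := by
      nlinarith [mul_nonneg (mul_nonneg hK.le hβ0.le) hσ2, mul_nonneg hK.le (by linarith : (0:ℝ) ≤ 1 - xbar)]
    have h3 : K * (1 - xbar) * (1 - 1/α) * (1 - 1/N) ≤ 1 := by
      have h4 := mul_le_mul_of_nonneg_right (h2.trans hptle) hNpos.le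
      have h5 : 1 / (1 - 1/N) * (1 - 1/N) = 1 := one_div_mul_cancel hNpos.ne'
      linarith
    rw [le_div_iff₀ (by positivity)]
    nlinarith
end

section
/- Let K > 0, 0 ≤ β < 1, p̃ ≥ 0, and σ² ≥ 0 be real numbers, and set a := β·K, b := −(p̃ + (1+β)·K), c := (1 + β·σ²)·K. If x̄ is any real solution of a·x̄² + b·x̄ + c = 0 and β > 0, then x̄ ≥ (p̃ + 2·K·β − p̃·(1+β)/(1−β)) / (2·β·K). -/
/-- Appendix A: any real root of the quadratic `a·x̄² + b·x̄ + c = 0` with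
`a = β·K`, `b = −(p̃ + (1+β)·K)`, `c = (1 + β·σ²)·K` satisfies the stated lower bound. -/
theorem stmt_1 (K β ptilde σ2 xbar : ℝ)
    (hK : 0 < K) (hβ0 : 0 ≤ β) (hβ1 : β < 1) (hp : 0 ≤ ptilde) (hσ2 : 0 ≤ σ2)
    (hβpos : 0 < β)
    (hroot : (β * K) * xbar ^ 2 + (-(ptilde + (1 + β) * K)) * xbar
        + ((1 + β * σ2) * K) = 0) :
    xbar ≥ (ptilde + 2 * K * β - ptilde * (1 + β) / (1 - β)) / (2 * β * K) := by
  have h1 : 0 < 1 - β := by linarith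
  have hden : ((1 - β) * K) ≠ 0 := by positivity
  set t := ptilde / ((1 - β) * K) with ht
  have htK : t * ((1 - β) * K) = ptilde := div_mul_cancel₀ _ hden
  have ht0 : 0 ≤ t := by positivity
  have key : xbar ≥ 1 - t := by
    by_contra h
    push_neg at h
    have hβK : 0 < β * K := mul_pos hβpos hK
    have h2 : β * K * (xbar + 1 - t) < ptilde + (1 + β) * K := by
      nlinarith [mul_lt_mul_of_pos_left h hβK, mul_nonneg hβK.le ht0]
    have hprod : 0 < (1 - t - xbar) * ((ptilde + (1 + β) * K) - β * K * (xbar + 1 - t)) :=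
      mul_pos (by linarith) (by linarith)
    nlinarith [hprod, mul_nonneg hβK.le (sq_nonneg t), mul_nonneg ht0 hp,
      mul_nonneg (mul_nonneg hβ0 hσ2) hK.le, htK]
  have heq : (ptilde + 2 * K * β - ptilde * (1 + β) / (1 - β)) / (2 * β * K) = 1 - t := by
    rw [ht]
    field_simp
    ring
  rw [heq]
  exact key
end

section
/- Let M and N be real numbers with 0 < M ≤ N, let K be a positive integer, and let α be a real number with 1 ≤ α < 2. Define R(M, N, K) := (N/M − 1)·(1 − (1 − M/N)^K). Then R(M, α·N, K) ≤ 2·R(M, N, K) + (α − 1)/(1 − α/2). -/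
/-- Peak rate of the decentralized coded caching scheme. -/
noncomputable def R (M N : ℝ) (K : ℕ) : ℝ := (N / M - 1) * (1 - (1 - M / N) ^ K)

/-- Appendix B: `R(M, α·N, K) ≤ 2·R(M, N, K) + (α − 1)/(1 − α/2)`. -/
theorem stmt_4 (M N α : ℝ) (K : ℕ)
    (hM : 0 < M) (hMN : M ≤ N) (hK : 0 < K) (hα1 : 1 ≤ α) (hα2 : α < 2) :
    R M (α * N) K ≤ 2 * R M N K + (α - 1) / (1 - α / 2) := by
  have hN : 0 < N := lt_of_lt_of_le hM hMN
  have hαpos : (0:ℝ) < α := by linarith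
  have hαN : 0 < α * N := mul_pos hαpos hN
  have h1 : (0:ℝ) ≤ 1 - M / N := by
    have : M / N ≤ 1 := (div_le_one hN).mpr hMN
    linarith
  have h2 : 1 - M / N ≤ 1 - M / (α * N) := by
    have : M / (α * N) ≤ M / N := by
      apply div_le_div_of_nonneg_left hM.le hN
      nlinarith
    linarith
  have hpow : (1 - M / N) ^ K ≤ (1 - M / (α * N)) ^ K := pow_le_pow_left₀ h1 h2 K
  have hpow1a : (1 - M / N) ^ K ≤ 1 := pow_le_one₀ h1 (by
    have : 0 < M / N := div_pos hM hN
    linarith)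
  have hNM1 : (1:ℝ) ≤ N / M := (one_le_div hM).mpr hMN
  have hαNM : α * N / M - 1 = α * (N / M) - 1 := by ring
  have hnn : 0 ≤ α * N / M - 1 := by
    rw [hαNM]; nlinarith
  have ht : 0 ≤ 1 - (1 - M / N) ^ K := by linarith
  have key1 : R M (α * N) K ≤ (α * N / M - 1) * (1 - (1 - M / N) ^ K) := by
    unfold R
    apply mul_le_mul_of_nonneg_left (by linarith) hnn
  have key2 : α * N / M - 1 ≤ 2 * (N / M - 1) + (α - 1) := by
    rw [hαNM]; nlinarith
  have key3 : (α * N / M - 1) * (1 - (1 - M / N) ^ K)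
      ≤ (2 * (N / M - 1) + (α - 1)) * (1 - (1 - M / N) ^ K) :=
    mul_le_mul_of_nonneg_right key2 ht
  have key4 : (α - 1) * (1 - (1 - M / N) ^ K) ≤ (α - 1) / (1 - α / 2) := by
    have h5 : (α - 1) * (1 - (1 - M / N) ^ K) ≤ α - 1 := by nlinarith [pow_nonneg h1 K]
    have h6 : α - 1 ≤ (α - 1) / (1 - α / 2) := by
      rw [le_div_iff₀ (by linarith)]; nlinarith
    linarith
  have : (2 * (N / M - 1) + (α - 1)) * (1 - (1 - M / N) ^ K)
      = 2 * R M N K + (α - 1) * (1 - (1 - M / N) ^ K) := by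
    unfold R; ring
  linarith [key1, key3, key4, this.le, this.ge]
end

section
/- Let M and N be real numbers with 0 < M ≤ N, let K be a positive integer, and let α be a real number with 1 ≤ α < 2. If N/M ≥ 1/(2 − α), then (α·N/M − 1)·(1 − (1 − M/(α·N))^K) ≤ 2·(N/M − 1)·(1 − (1 − M/N)^K). -/
/-- Appendix B, first case: if `N/M ≥ 1/(2 − α)` then
`(α·N/M − 1)·(1 − (1 − M/(α·N))^K) ≤ 2·(N/M − 1)·(1 − (1 − M/N)^K)`. -/
theorem stmt_5 (M N α : ℝ) (K : ℕ)
    (hM : 0 < M) (hMN : M ≤ N) (hK : 0 < K) (hα1 : 1 ≤ α) (hα2 : α < 2)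
    (hcase : N / M ≥ 1 / (2 - α)) :
    (α * N / M - 1) * (1 - (1 - M / (α * N)) ^ K)
      ≤ 2 * ((N / M - 1) * (1 - (1 - M / N) ^ K)) := by
  have hN : 0 < N := lt_of_lt_of_le hM hMN
  have hα0 : 0 < α := lt_of_lt_of_le one_pos hα1
  have hαN : 0 < α * N := mul_pos hα0 hN
  have h2α : 0 < 2 - α := by linarith
  -- factor bounds
  have hb1 : (1 - M / (α * N)) ^ K ≥ (1 - M / N) ^ K := by
    apply pow_le_pow_left₀
    · have : M / N ≤ 1 := (div_le_one hN).mpr hMN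
      linarith
    · have : M / (α * N) ≤ M / N := by
        apply div_le_div_of_nonneg_left hM.le hN
        nlinarith
      linarith
  have hb2 : (1 - M / (α * N)) ^ K ≤ 1 := by
    have h01 : M / (α * N) ≤ 1 := by
      apply (div_le_one hαN).mpr; nlinarith
    have hpos : 0 ≤ M / (α * N) := by positivity
    exact pow_le_one₀ (by linarith) (by linarith)
  -- coefficient bound
  have hc : α * N / M - 1 ≤ 2 * (N / M - 1) := by
    have h1 : (1:ℝ) ≤ (2 - α) * (N / M) := by
      have := (div_le_iff₀ h2α).mp hcase
      nlinarith
    have : α * N / M = α * (N / M) := by ring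
    nlinarith
  have hc0 : 0 ≤ α * N / M - 1 := by
    have : (1:ℝ) ≤ N / M := (one_le_div hM).mpr hMN
    have : α * N / M = α * (N / M) := by ring
    nlinarith [(one_le_div hM).mpr hMN]
  have hnn : 0 ≤ 1 - (1 - M / (α*N)) ^ K := by linarith
  calc (α * N / M - 1) * (1 - (1 - M / (α * N)) ^ K)
      ≤ (2 * (N / M - 1)) * (1 - (1 - M / N) ^ K) := by
        apply mul_le_mul hc _ hnn (by linarith)
        linarith
    _ = 2 * ((N / M - 1) * (1 - (1 - M / N) ^ K)) := by ring
end

section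
/- Let M and N be real numbers with 0 < M ≤ N and N ≥ 7, and let K be a positive integer. Define R(M, N, K) := (N/M − 1)·(1 − (1 − M/N)^K). Then R(M, (7/5)·N, K) + 1/((1 − 1/N)·(1 − 5/7)) ≤ 2·R(M, N, K) + 6. -/
lemma key_ineq (y : ℝ) (hy0 : 0 < y) (hy1 : y ≤ 1) (K : ℕ) :
    (7/(5*y) - 1) * (1 - (1 - 5/7*y)^K) ≤ 2 * ((1/y - 1) * (1 - (1-y)^K)) + 2/5 := by
  have h1 : (0:ℝ) ≤ 1 - y := by linarith
  have h2 : 1 - y ≤ 1 - 5/7*y := by linarith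
  have hpow : (1-y)^K ≤ (1 - 5/7*y)^K := pow_le_pow_left₀ h1 h2 K
  have hpow1 : (1 - 5/7*y)^K ≤ 1 := pow_le_one₀ (by linarith) (by linarith)
  have hpow0 : (0:ℝ) ≤ (1-y)^K := pow_nonneg h1 K
  set T : ℝ := 1 - (1-y)^K with hT
  set T' : ℝ := 1 - (1 - 5/7*y)^K with hT'
  have hT'0 : 0 ≤ T' := by simp only [hT']; linarith
  have hT'T : T' ≤ T := by simp only [hT, hT']; linarith
  have hT1 : T ≤ 1 := by simp only [hT]; linarith
  have hT0 : 0 ≤ T := le_trans hT'0 hT'T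
  have hc : (0:ℝ) < 5*y := by linarith
  have hnn : (0:ℝ) ≤ 7/(5*y) - 1 :=
    sub_nonneg.2 ((one_le_div hc).2 (by linarith))
  have step1 : (7/(5*y) - 1) * T' ≤ (7/(5*y) - 1) * T :=
    mul_le_mul_of_nonneg_left hT'T hnn
  have hu : (1:ℝ) ≤ 1/y := by rw [le_div_iff₀ hy0]; linarith
  have h75 : 7/(5*y) = 7/5 * (1/y) := by
    field_simp
  have step2 : (7/(5*y) - 1) * T ≤ 2 * ((1/y - 1) * T) + 2/5 := by
    rw [h75]
    nlinarith [mul_nonneg hT0 (sub_nonneg.2 hu)]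
  linarith

/-- Final step of the upper bound in Theorem 1, with `α = 7/5` and `N ≥ 7`:
`R(M, (7/5)·N, K) + 1/((1 − 1/N)·(1 − 5/7)) ≤ 2·R(M, N, K) + 6`. -/
theorem stmt_7 (M N : ℝ) (K : ℕ)
    (hM : 0 < M) (hMN : M ≤ N) (hN : 7 ≤ N) (hK : 0 < K) :
    R M ((7/5) * N) K + 1 / ((1 - 1/N) * (1 - 5/7)) ≤ 2 * R M N K + 6 := by
  have hN0 : (0:ℝ) < N := by linarith
  have hy0 : 0 < M/N := div_pos hM hN0
  have hy1 : M/N ≤ 1 := (div_le_one hN0).2 hMN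
  have e1 : (7/5 * N) / M - 1 = 7/(5*(M/N)) - 1 := by
    field_simp
  have e2 : M/((7/5) * N) = 5/7*(M/N) := by
    field_simp
  have e3 : N/M = 1/(M/N) := (one_div_div M N).symm
  have hkey := key_ineq (M/N) hy0 hy1 K
  have hNinv : 1/N ≤ 1/7 := by
    rw [div_le_div_iff₀ hN0 (by norm_num)]; linarith
  have hden : (12:ℝ)/49 ≤ (1 - 1/N) * (1 - 5/7) := by nlinarith
  have hfrac : 1 / ((1 - 1/N) * (1 - 5/7)) ≤ 49/12 := by
    have := one_div_le_one_div_of_le (by norm_num : (0:ℝ) < 12/49) hden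
    calc 1 / ((1 - 1/N) * (1 - 5/7)) ≤ 1/((12:ℝ)/49) := this
      _ = 49/12 := by norm_num
  unfold R
  rw [e1, e2, e3]
  linarith
end
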